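/- For N = 3, β = 1, λ₁ = −1/2, the CDF of the largest eigenvalue of the Laguerre ensemble equals F_3^L(1;x) = √(2/π)(1−x)√x e^{-x/2} − √(2/π)√x e^{-3x/2} + erf(√(x/2)) − (1+x) e^{-x} erf(√(x/2)), where F_3^L(1;x) = (1/Z) ∫_0^x∫_0^x∫_0^x ∏_{l=1}^3 x_l^{-1/2} e^{-x_l/2} ∏_{1≤j<k≤3}|x_k−x_j| dx_1dx_2dx_3 with Z the normalizing constant making F_3^L(1;x) → 1 as x → ∞. -/

import Mathlib

open Real MeasureTheory Finset

/-- The error function `erf t = (2/√π) ∫₀ᵗ e^{-u²} du`. -/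
noncomputable def erf (t : ℝ) : ℝ :=
  (2 / Real.sqrt Real.pi) * ∫ u in (0:ℝ)..t, Real.exp (-u ^ 2)

/-- Normalization of the `N = 3`, `β = 1`, `λ₁ = -1/2` Laguerre ensemble:
`Z = 2^{N(N-1)/2 + N/2} ∏_{j=0}^{2} Γ(j/2+1/2) Γ((j+1)/2+1) / Γ(3/2)`. -/
noncomputable def Z3L : ℝ :=
  (2 : ℝ) ^ ((3 * (3 - 1) / 2 : ℝ) + 3 / 2) *
    ∏ j ∈ Finset.range 3,
      Real.Gamma ((j : ℝ) / 2 + 1 / 2) * Real.Gamma (((j : ℝ) + 1) / 2 + 1) /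
        Real.Gamma (3 / 2)

/-- The CDF of the largest eigenvalue for `N = 3`, `β = 1`, `λ₁ = -1/2`. -/
noncomputable def F3L (x : ℝ) : ℝ :=
  (1 / Z3L) *
    ∫ x1 in (0:ℝ)..x, ∫ x2 in (0:ℝ)..x, ∫ x3 in (0:ℝ)..x,
      (x1 ^ (-(1:ℝ)/2) * Real.exp (-x1 / 2)) *
      (x2 ^ (-(1:ℝ)/2) * Real.exp (-x2 / 2)) *
      (x3 ^ (-(1:ℝ)/2) * Real.exp (-x3 / 2)) *
      (|x2 - x1| * |x3 - x1| * |x3 - x2|)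

/-! ### Auxiliary definitions -/

noncomputable def cc : ℝ := Real.sqrt (2 * Real.pi)

noncomputable def gg (t : ℝ) : ℝ := t ^ (-(1:ℝ)/2) * Real.exp (-t / 2)

noncomputable def eps (t : ℝ) : ℝ := erf (Real.sqrt (t / 2))

noncomputable def sg (t : ℝ) : ℝ := Real.sqrt t * Real.exp (-t / 2)

/-- generic integrand shape -/
noncomputable def Rf (p0 p1 p2 e0 e1 e2 f0 f1 t : ℝ) : ℝ :=
  p0 + p1 * t + p2 * t ^ 2 + (e0 + e1 * t + e2 * t ^ 2) * eps t + (f0 + f1 * t) * sg t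

/-- generic antiderivative shape -/
noncomputable def Wf (p0 p1 p2 e0 e1 e2 f0 f1 t : ℝ) : ℝ :=
  (cc * (p0 + p1 + 3 * p2)) * eps t
  + (cc * (e0 + e1) / 2 + 3 * cc * e2 / 2) * eps t ^ 2
  + (-(2 * p1) - 6 * p2 - 2 * p2 * t) * sg t
  + (-(2 * e1) - 6 * e2 - 2 * e2 * t) * (sg t * eps t)
  + ((-(2 * e1 + 8 * e2) / cc - f0 - f1) + (-(2 * e2) / cc - f1) * t) * Real.exp (-t)
  + ((2 * e1 + 8 * e2) / cc + f0 + f1)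

noncomputable def Qq (a b t : ℝ) : ℝ :=
  cc * (3 - a - b + a * b) * eps t + 2 * sg t * (a + b - 3 - t)

noncomputable def SSf (x a : ℝ) : ℝ :=
  Rf (16 - 16 * (1 + x) * Real.exp (-x) - 4 * cc * sg x * x * eps x)
     (-32 + (32 + 8 * x) * Real.exp (-x) + (12 + 4 * x) * cc * sg x * eps x)
     (8 - 8 * Real.exp (-x) - 4 * cc * sg x * eps x)
     (8 * cc * sg x * x)
     (-(24 + 8 * x) * cc * sg x)
     (8 * cc * sg x)
     (-16 * sg x * x)
     (16 * sg x + 16 * cc * eps x) a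

/-! ### Basic lemmas -/

lemma cc_pos : 0 < cc := Real.sqrt_pos.2 (by positivity)

lemma cc_ne : cc ≠ 0 := ne_of_gt cc_pos

lemma cc_eq : cc = Real.sqrt 2 * Real.sqrt Real.pi := by
  rw [cc, Real.sqrt_mul (by norm_num : (0:ℝ) ≤ 2)]

lemma hasDerivAt_erf (y : ℝ) :
    HasDerivAt erf (2 / Real.sqrt Real.pi * Real.exp (-y ^ 2)) y := by
  have hc : Continuous fun u : ℝ => Real.exp (-u ^ 2) := by fun_prop
  have h : HasDerivAt (fun t => ∫ u in (0:ℝ)..t, Real.exp (-u ^ 2)) (Real.exp (-y ^ 2)) y := by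
    refine intervalIntegral.integral_hasDerivAt_right (hc.intervalIntegrable _ _)
      (hc.stronglyMeasurableAtFilter _ _) hc.continuousAt
  exact h.const_mul (2 / Real.sqrt Real.pi)

lemma continuous_erf : Continuous erf := by
  rw [continuous_iff_continuousAt]
  exact fun y => (hasDerivAt_erf y).continuousAt

@[fun_prop]
lemma continuous_eps : Continuous eps :=
  continuous_erf.comp (Real.continuous_sqrt.comp (continuous_id.div_const 2))

@[fun_prop]
lemma continuous_sg : Continuous sg := by
  unfold sg; fun_prop

lemma erf_zero' : erf 0 = 0 := by simp [erf]

lemma eps_zero : eps 0 = 0 := by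
  rw [eps]; norm_num [erf_zero']

lemma sg_zero : sg 0 = 0 := by simp [sg]

lemma Wf_zero (p0 p1 p2 e0 e1 e2 f0 f1 : ℝ) : Wf p0 p1 p2 e0 e1 e2 f0 f1 0 = 0 := by
  simp [Wf, eps_zero, sg_zero]
  ring

lemma hasDerivAt_eps {t : ℝ} (ht : 0 < t) :
    HasDerivAt eps (Real.exp (-t / 2) / (cc * Real.sqrt t)) t := by
  have h1 : HasDerivAt (fun s : ℝ => Real.sqrt (s / 2)) (1 / (2 * Real.sqrt (t / 2)) * (1 / 2)) t := by
    exact (Real.hasDerivAt_sqrt (by positivity)).comp t ((hasDerivAt_id t).div_const 2)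
  have h2 := (hasDerivAt_erf (Real.sqrt (t / 2))).comp t h1
  have h3 : HasDerivAt eps
      (2 / Real.sqrt Real.pi * Real.exp (-Real.sqrt (t / 2) ^ 2) *
        (1 / (2 * Real.sqrt (t / 2)) * (1 / 2))) t := h2
  convert h3 using 1
  rw [Real.sq_sqrt (by positivity : (0:ℝ) ≤ t / 2)]
  have hs2 : Real.sqrt (t / 2) = Real.sqrt t / Real.sqrt 2 := Real.sqrt_div ht.le 2
  have h22 : Real.sqrt 2 * Real.sqrt 2 = 2 := Real.mul_self_sqrt (by norm_num)
  have hπ : (0:ℝ) < Real.sqrt Real.pi := Real.sqrt_pos.2 Real.pi_pos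
  have hst : (0:ℝ) < Real.sqrt t := Real.sqrt_pos.2 ht
  rw [hs2, cc_eq, show -(t / 2) = -t / 2 by ring]
  field_simp
  ring_nf
  rw [sq, h22]

lemma gg_eq {t : ℝ} (ht : 0 < t) : gg t = Real.exp (-t / 2) / Real.sqrt t := by
  rw [gg, show (-(1:ℝ)/2) = -(1/2 : ℝ) by norm_num, Real.rpow_neg ht.le, ← Real.sqrt_eq_rpow]
  field_simp


lemma continuous_Rf (p0 p1 p2 e0 e1 e2 f0 f1 : ℝ) :
    Continuous (fun t => Rf p0 p1 p2 e0 e1 e2 f0 f1 t) := by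
  unfold Rf; fun_prop

lemma continuous_Wf (p0 p1 p2 e0 e1 e2 f0 f1 : ℝ) :
    Continuous (fun t => Wf p0 p1 p2 e0 e1 e2 f0 f1 t) := by
  unfold Wf; fun_prop

lemma integrable_gg_mul {l r : ℝ} {φ : ℝ → ℝ} (hφ : ContinuousOn φ (Set.uIcc l r)) :
    IntervalIntegrable (fun t => gg t * φ t) volume l r := by
  have h1 : IntervalIntegrable (fun t : ℝ => t ^ (-(1:ℝ)/2)) volume l r :=
    intervalIntegral.intervalIntegrable_rpow' (by norm_num)
  have h2 : ContinuousOn (fun t => Real.exp (-t / 2) * φ t) (Set.uIcc l r) :=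
    (Continuous.continuousOn (by fun_prop)).mul hφ
  have := h1.mul_continuousOn h2
  simpa [gg, mul_assoc] using this

set_option maxHeartbeats 2000000 in
lemma hasDerivAt_Wf (p0 p1 p2 e0 e1 e2 f0 f1 : ℝ) {t : ℝ} (ht : 0 < t) :
    HasDerivAt (fun t => Wf p0 p1 p2 e0 e1 e2 f0 f1 t)
      (gg t * Rf p0 p1 p2 e0 e1 e2 f0 f1 t) t := by
  have hst : (0:ℝ) < Real.sqrt t := Real.sqrt_pos.2 ht
  have hsq : Real.sqrt t ^ 2 = t := Real.sq_sqrt ht.le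
  have hE : HasDerivAt eps (Real.exp (-t / 2) / (cc * Real.sqrt t)) t := hasDerivAt_eps ht
  have hexp2 : HasDerivAt (fun t : ℝ => Real.exp (-t / 2)) (Real.exp (-t / 2) * (-1 / 2)) t := by
    exact (Real.hasDerivAt_exp (-t / 2)).comp t (((hasDerivAt_id t).neg).div_const 2)
  have hs : HasDerivAt (fun t : ℝ => Real.sqrt t) (1 / (2 * Real.sqrt t)) t :=
    Real.hasDerivAt_sqrt ht.ne'
  have hsg : HasDerivAt (fun t : ℝ => sg t)
      (1 / (2 * Real.sqrt t) * Real.exp (-t / 2) + Real.sqrt t * (Real.exp (-t / 2) * (-1 / 2))) t := by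
    unfold sg; exact hs.mul hexp2
  have hexp1 : HasDerivAt (fun t : ℝ => Real.exp (-t)) (Real.exp (-t) * (-1)) t := by
    exact (Real.hasDerivAt_exp (-t)).comp t (hasDerivAt_id t).neg
  have h1 := hE.const_mul (cc * (p0 + p1 + 3 * p2))
  have h2 := (hE.pow 2).const_mul (cc * (e0 + e1) / 2 + 3 * cc * e2 / 2)
  have hlin1 : HasDerivAt (fun t : ℝ => -(2 * p1) - 6 * p2 - 2 * p2 * t) (-(2 * p2)) t := by
    have := ((hasDerivAt_id t).const_mul (2 * p2)).const_sub (-(2 * p1) - 6 * p2)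
    simp only [id_eq, mul_one] at this; exact this
  have h3 := hlin1.mul hsg
  have hlin2 : HasDerivAt (fun t : ℝ => -(2 * e1) - 6 * e2 - 2 * e2 * t) (-(2 * e2)) t := by
    have := ((hasDerivAt_id t).const_mul (2 * e2)).const_sub (-(2 * e1) - 6 * e2)
    simp only [id_eq, mul_one] at this; exact this
  have h4 := hlin2.mul (hsg.mul hE)
  have hlin3 : HasDerivAt
      (fun t : ℝ => (-(2 * e1 + 8 * e2) / cc - f0 - f1) + (-(2 * e2) / cc - f1) * t)
      (-(2 * e2) / cc - f1) t := by
    have := ((hasDerivAt_id t).const_mul (-(2 * e2) / cc - f1)).const_add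
      (-(2 * e1 + 8 * e2) / cc - f0 - f1)
    simp only [id_eq, mul_one] at this; exact this
  have h5 := hlin3.mul hexp1
  have H := ((((h1.add h2).add h3).add h4).add h5).add
    (hasDerivAt_const t ((2 * e1 + 8 * e2) / cc + f0 + f1))
  have Hfun : HasDerivAt (fun t => Wf p0 p1 p2 e0 e1 e2 f0 f1 t) _ t := H
  convert Hfun using 1
  rw [gg_eq ht]
  simp only [Rf, sg, Pi.mul_apply]
  have hX : Real.exp (-t) = Real.exp (-t / 2) * Real.exp (-t / 2) := by
    rw [← Real.exp_add]; ring_nf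
  rw [hX]
  set E := eps t with hEdef
  set q := Real.exp (-t / 2) with hqdef
  set s := Real.sqrt t with hsdef
  push_cast
  rw [← hsq]
  field_simp [cc_ne, hst.ne']
  ring_nf

lemma master (p0 p1 p2 e0 e1 e2 f0 f1 : ℝ) {l r : ℝ} (hl : 0 ≤ l) (hlr : l ≤ r) :
    ∫ t in l..r, gg t * Rf p0 p1 p2 e0 e1 e2 f0 f1 t
      = Wf p0 p1 p2 e0 e1 e2 f0 f1 r - Wf p0 p1 p2 e0 e1 e2 f0 f1 l := by
  refine intervalIntegral.integral_eq_sub_of_hasDeriv_right_of_le hlr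
    (continuous_Wf p0 p1 p2 e0 e1 e2 f0 f1).continuousOn
    (fun t htt => ((hasDerivAt_Wf p0 p1 p2 e0 e1 e2 f0 f1
      (lt_of_le_of_lt hl htt.1)).hasDerivWithinAt))
    (integrable_gg_mul (continuous_Rf p0 p1 p2 e0 e1 e2 f0 f1).continuousOn)


lemma Qq_zero (a b : ℝ) : Qq a b 0 = 0 := by simp [Qq, eps_zero, sg_zero]

lemma inner_ordered {a b x : ℝ} (hb : 0 ≤ b) (hba : b ≤ a) (hax : a ≤ x) :
    ∫ t in (0:ℝ)..x, gg t * (|t - a| * |t - b|)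
      = Qq a b x - 2 * Qq a b a + 2 * Qq a b b := by
  have ha : 0 ≤ a := hb.trans hba
  have hx : 0 ≤ x := ha.trans hax
  have hWQ : ∀ t : ℝ, Wf (a * b) (-(a + b)) 1 0 0 0 0 0 t = Qq a b t := by
    intro t; simp only [Wf, Qq]; ring
  have hWQ' : ∀ t : ℝ, Wf (-(a * b)) (a + b) (-1) 0 0 0 0 0 t = -Qq a b t := by
    intro t; simp only [Wf, Qq]; ring
  have I1 : ∫ t in (0:ℝ)..b, gg t * (|t - a| * |t - b|) = Qq a b b := by
    rw [intervalIntegral.integral_congr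
      (g := fun t => gg t * Rf (a * b) (-(a + b)) 1 0 0 0 0 0 t) ?_]
    · rw [master _ _ _ _ _ _ _ _ le_rfl hb, hWQ, hWQ, Qq_zero, sub_zero]
    · intro t htt
      rw [Set.uIcc_of_le hb] at htt
      simp only
      rw [abs_of_nonpos (by linarith [htt.2] : t - a ≤ 0),
        abs_of_nonpos (by linarith [htt.2] : t - b ≤ 0)]
      simp only [Rf]; ring
  have I2 : ∫ t in b..a, gg t * (|t - a| * |t - b|) = -Qq a b a + Qq a b b := by
    rw [intervalIntegral.integral_congr
      (g := fun t => gg t * Rf (-(a * b)) (a + b) (-1) 0 0 0 0 0 t) ?_]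
    · rw [master _ _ _ _ _ _ _ _ hb hba, hWQ', hWQ']; ring
    · intro t htt
      rw [Set.uIcc_of_le hba] at htt
      simp only
      rw [abs_of_nonpos (by linarith [htt.2] : t - a ≤ 0),
        abs_of_nonneg (by linarith [htt.1] : 0 ≤ t - b)]
      simp only [Rf]; ring
  have I3 : ∫ t in a..x, gg t * (|t - a| * |t - b|) = Qq a b x - Qq a b a := by
    rw [intervalIntegral.integral_congr
      (g := fun t => gg t * Rf (a * b) (-(a + b)) 1 0 0 0 0 0 t) ?_]
    · rw [master _ _ _ _ _ _ _ _ ha hax, hWQ, hWQ]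
    · intro t htt
      rw [Set.uIcc_of_le hax] at htt
      simp only
      rw [abs_of_nonneg (by linarith [htt.1] : 0 ≤ t - a),
        abs_of_nonneg (by linarith [htt.1, hba] : 0 ≤ t - b)]
      simp only [Rf]; ring
  have cont : ∀ u v : ℝ, IntervalIntegrable (fun t => gg t * (|t - a| * |t - b|)) volume u v := by
    intro u v
    exact integrable_gg_mul (Continuous.continuousOn (by fun_prop))
  have S1 := intervalIntegral.integral_add_adjacent_intervals (cont 0 b) (cont b a)
  have S2 := intervalIntegral.integral_add_adjacent_intervals (cont 0 a) (cont a x)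
  rw [← S2, ← S1, I1, I2, I3]; ring

lemma inner_all {x a b : ℝ} (ha : a ∈ Set.Icc (0:ℝ) x) (hb : b ∈ Set.Icc (0:ℝ) x) :
    ∫ t in (0:ℝ)..x, gg t * (|t - a| * |t - b|)
      = Qq a b x - 2 * Qq a b (max a b) + 2 * Qq a b (min a b) := by
  rcases le_total b a with h | h
  · rw [max_eq_left h, min_eq_right h]; exact inner_ordered hb.1 h ha.2
  · rw [max_eq_right h, min_eq_left h]
    have e1 : ∫ t in (0:ℝ)..x, gg t * (|t - a| * |t - b|)
        = ∫ t in (0:ℝ)..x, gg t * (|t - b| * |t - a|) := by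
      apply intervalIntegral.integral_congr; intro t _; ring
    rw [e1, inner_ordered ha.1 h hb.2]
    simp only [Qq]; ring


set_option maxHeartbeats 4000000 in
lemma middle {x a : ℝ} (ha : a ∈ Set.Icc (0:ℝ) x) :
    ∫ b in (0:ℝ)..x, gg b *
        (|b - a| * (Qq a b x - 2 * Qq a b (max a b) + 2 * Qq a b (min a b)))
      = SSf x a := by
  have ha0 : 0 ≤ a := ha.1
  have hax : a ≤ x := ha.2
  -- coefficients for the lower segment
  set Ea := eps a with hEa
  set Ex := eps x with hEx
  set u := sg a with hu
  set v := sg x with hv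
  set al := cc * (3 - a) * (Ex - 2 * Ea) + 2 * v * (a - 3 - x) + 12 * u with hal
  set be := cc * (a - 1) * (Ex - 2 * Ea) + 2 * v - 4 * u with hbe
  set al' := cc * (3 - a) * (Ex + 2 * Ea) + 2 * v * (a - 3 - x) - 12 * u with hal'
  set be' := cc * (a - 1) * (Ex + 2 * Ea) + 2 * v + 4 * u with hbe'
  have cont : ∀ w z : ℝ, IntervalIntegrable (fun b => gg b *
      (|b - a| * (Qq a b x - 2 * Qq a b (max a b) + 2 * Qq a b (min a b)))) volume w z := by
    intro w z
    refine integrable_gg_mul (Continuous.continuousOn ?_)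
    have hQ : ∀ (f : ℝ → ℝ), Continuous f → Continuous (fun b => Qq a b (f b)) := by
      intro f hf
      unfold Qq
      fun_prop
    have h1 := hQ (fun _ => x) continuous_const
    have h2 := hQ (fun b => max a b) (continuous_const.max continuous_id)
    have h3 := hQ (fun b => min a b) (continuous_const.min continuous_id)
    fun_prop
  have I1 : ∫ b in (0:ℝ)..a, gg b *
      (|b - a| * (Qq a b x - 2 * Qq a b (max a b) + 2 * Qq a b (min a b)))
      = Wf (a * al) (a * be - al) (-be) (a * (2 * cc * (3 - a)))
          (a * (2 * cc * (a - 1)) - 2 * cc * (3 - a)) (-(2 * cc * (a - 1)))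
          (a * (4 * (a - 3))) (-(4 * (a - 3))) a
        - Wf (a * al) (a * be - al) (-be) (a * (2 * cc * (3 - a)))
          (a * (2 * cc * (a - 1)) - 2 * cc * (3 - a)) (-(2 * cc * (a - 1)))
          (a * (4 * (a - 3))) (-(4 * (a - 3))) 0 := by
    rw [intervalIntegral.integral_congr
      (g := fun b => gg b * Rf (a * al) (a * be - al) (-be) (a * (2 * cc * (3 - a)))
          (a * (2 * cc * (a - 1)) - 2 * cc * (3 - a)) (-(2 * cc * (a - 1)))
          (a * (4 * (a - 3))) (-(4 * (a - 3))) b) ?_]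
    · exact master _ _ _ _ _ _ _ _ le_rfl ha0
    · intro b hbb
      rw [Set.uIcc_of_le ha0] at hbb
      simp only
      rw [max_eq_left hbb.2, min_eq_right hbb.2,
        abs_of_nonpos (by linarith [hbb.2] : b - a ≤ 0)]
      simp only [Rf, Qq, hal, hbe]
      ring
  have I2 : ∫ b in a..x, gg b *
      (|b - a| * (Qq a b x - 2 * Qq a b (max a b) + 2 * Qq a b (min a b)))
      = Wf (-(a * al')) (al' - a * be') be' (-(a * (-(2 * cc) * (3 - a))))
          ((-(2 * cc) * (3 - a)) - a * (-(2 * cc) * (a - 1))) (-(2 * cc) * (a - 1))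
          (-(a * (-4 * (a - 3)))) (-4 * (a - 3)) x
        - Wf (-(a * al')) (al' - a * be') be' (-(a * (-(2 * cc) * (3 - a))))
          ((-(2 * cc) * (3 - a)) - a * (-(2 * cc) * (a - 1))) (-(2 * cc) * (a - 1))
          (-(a * (-4 * (a - 3)))) (-4 * (a - 3)) a := by
    rw [intervalIntegral.integral_congr
      (g := fun b => gg b * Rf (-(a * al')) (al' - a * be') be' (-(a * (-(2 * cc) * (3 - a))))
          ((-(2 * cc) * (3 - a)) - a * (-(2 * cc) * (a - 1))) (-(2 * cc) * (a - 1))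
          (-(a * (-4 * (a - 3)))) (-4 * (a - 3)) b) ?_]
    · exact master _ _ _ _ _ _ _ _ ha0 hax
    · intro b hbb
      rw [Set.uIcc_of_le hax] at hbb
      simp only
      rw [max_eq_right hbb.1, min_eq_left hbb.1,
        abs_of_nonneg (by linarith [hbb.1] : 0 ≤ b - a)]
      simp only [Rf, Qq, hal', hbe']
      ring
  rw [← intervalIntegral.integral_add_adjacent_intervals (cont 0 a) (cont a x), I1, I2,
    Wf_zero, sub_zero]
  simp only [Wf, SSf, Rf, hal, hbe, hal', hbe', hEa, hEx, hu, hv]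
  field_simp [cc_ne]
  ring


lemma sqrt_two_div_pi : Real.sqrt (2 / Real.pi) = 2 / cc := by
  rw [cc_eq, Real.sqrt_div (by norm_num : (0:ℝ) ≤ 2)]
  have h22 : Real.sqrt 2 * Real.sqrt 2 = 2 := Real.mul_self_sqrt (by norm_num)
  have hπ : (0:ℝ) < Real.sqrt Real.pi := Real.sqrt_pos.2 Real.pi_pos
  have h2 : (0:ℝ) < Real.sqrt 2 := Real.sqrt_pos.2 (by norm_num)
  field_simp
  linear_combination h22

lemma Z3L_eq : Z3L = 24 * cc := by
  have hG12 : Real.Gamma (1/2) = Real.sqrt Real.pi := Real.Gamma_one_half_eq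
  have hG32 : Real.Gamma (3/2) = Real.sqrt Real.pi / 2 := by
    rw [show (3/2 : ℝ) = 1/2 + 1 by norm_num, Real.Gamma_add_one (by norm_num), hG12]; ring
  have hG2 : Real.Gamma 2 = 1 := by
    rw [show (2:ℝ) = 1 + 1 by norm_num, Real.Gamma_add_one one_ne_zero, Real.Gamma_one]; ring
  have hG52 : Real.Gamma (5/2) = 3 / 4 * Real.sqrt Real.pi := by
    rw [show (5/2 : ℝ) = 3/2 + 1 by norm_num, Real.Gamma_add_one (by norm_num), hG32]; ring
  have hpow : (2 : ℝ) ^ ((3 * (3 - 1) / 2 : ℝ) + 3 / 2) = 16 * Real.sqrt 2 := by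
    rw [show (3 * (3 - 1) / 2 : ℝ) + 3 / 2 = ((4:ℕ):ℝ) + 1/2 by norm_num,
      Real.rpow_add (by norm_num : (0:ℝ) < 2), Real.rpow_natCast, ← Real.sqrt_eq_rpow]
    norm_num
  have hπ : (0:ℝ) < Real.sqrt Real.pi := Real.sqrt_pos.2 Real.pi_pos
  rw [Z3L, hpow, cc_eq, Finset.prod_range_succ, Finset.prod_range_succ,
    Finset.prod_range_one]
  push_cast
  norm_num
  rw [hG12, hG32, hG52]
  field_simp
  ring

theorem F3L_explicit (x : ℝ) (hx : 0 ≤ x) :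
    F3L x =
      Real.sqrt (2 / Real.pi) * (1 - x) * Real.sqrt x * Real.exp (-x / 2) -
        Real.sqrt (2 / Real.pi) * Real.sqrt x * Real.exp (-(3 * x) / 2) +
        erf (Real.sqrt (x / 2)) -
        (1 + x) * Real.exp (-x) * erf (Real.sqrt (x / 2)) := by
  have step1 : ∀ x1 ∈ Set.uIcc (0:ℝ) x,
      (∫ x2 in (0:ℝ)..x, ∫ x3 in (0:ℝ)..x,
        (x1 ^ (-(1:ℝ)/2) * Real.exp (-x1 / 2)) *
        (x2 ^ (-(1:ℝ)/2) * Real.exp (-x2 / 2)) *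
        (x3 ^ (-(1:ℝ)/2) * Real.exp (-x3 / 2)) *
        (|x2 - x1| * |x3 - x1| * |x3 - x2|))
      = gg x1 * SSf x x1 := by
    intro x1 hx1
    rw [Set.uIcc_of_le hx] at hx1
    have inner2 : ∀ x2 ∈ Set.uIcc (0:ℝ) x,
        (∫ x3 in (0:ℝ)..x,
          (x1 ^ (-(1:ℝ)/2) * Real.exp (-x1 / 2)) *
          (x2 ^ (-(1:ℝ)/2) * Real.exp (-x2 / 2)) *
          (x3 ^ (-(1:ℝ)/2) * Real.exp (-x3 / 2)) *
          (|x2 - x1| * |x3 - x1| * |x3 - x2|))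
        = gg x1 * (gg x2 * (|x2 - x1| *
            (Qq x1 x2 x - 2 * Qq x1 x2 (max x1 x2) + 2 * Qq x1 x2 (min x1 x2)))) := by
      intro x2 hx2
      rw [Set.uIcc_of_le hx] at hx2
      have e1 : (∫ x3 in (0:ℝ)..x,
          (x1 ^ (-(1:ℝ)/2) * Real.exp (-x1 / 2)) *
          (x2 ^ (-(1:ℝ)/2) * Real.exp (-x2 / 2)) *
          (x3 ^ (-(1:ℝ)/2) * Real.exp (-x3 / 2)) *
          (|x2 - x1| * |x3 - x1| * |x3 - x2|))
          = ∫ x3 in (0:ℝ)..x,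
            (gg x1 * gg x2 * |x2 - x1|) * (gg x3 * (|x3 - x1| * |x3 - x2|)) := by
        apply intervalIntegral.integral_congr
        intro x3 _
        simp only [gg]
        ring
      rw [e1, intervalIntegral.integral_const_mul, inner_all hx1 hx2]
      ring
    rw [intervalIntegral.integral_congr inner2, intervalIntegral.integral_const_mul,
      middle hx1]
  have hOut : (∫ x1 in (0:ℝ)..x, ∫ x2 in (0:ℝ)..x, ∫ x3 in (0:ℝ)..x,
        (x1 ^ (-(1:ℝ)/2) * Real.exp (-x1 / 2)) *
        (x2 ^ (-(1:ℝ)/2) * Real.exp (-x2 / 2)) *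
        (x3 ^ (-(1:ℝ)/2) * Real.exp (-x3 / 2)) *
        (|x2 - x1| * |x3 - x1| * |x3 - x2|))
      = Wf (16 - 16 * (1 + x) * Real.exp (-x) - 4 * cc * sg x * x * eps x)
          (-32 + (32 + 8 * x) * Real.exp (-x) + (12 + 4 * x) * cc * sg x * eps x)
          (8 - 8 * Real.exp (-x) - 4 * cc * sg x * eps x)
          (8 * cc * sg x * x)
          (-(24 + 8 * x) * cc * sg x)
          (8 * cc * sg x)
          (-16 * sg x * x)
          (16 * sg x + 16 * cc * eps x) x := by
    rw [intervalIntegral.integral_congr step1]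
    have e2 : (∫ x1 in (0:ℝ)..x, gg x1 * SSf x x1)
        = ∫ x1 in (0:ℝ)..x, gg x1 *
            Rf (16 - 16 * (1 + x) * Real.exp (-x) - 4 * cc * sg x * x * eps x)
              (-32 + (32 + 8 * x) * Real.exp (-x) + (12 + 4 * x) * cc * sg x * eps x)
              (8 - 8 * Real.exp (-x) - 4 * cc * sg x * eps x)
              (8 * cc * sg x * x)
              (-(24 + 8 * x) * cc * sg x)
              (8 * cc * sg x)
              (-16 * sg x * x)
              (16 * sg x + 16 * cc * eps x) x1 := rfl
    rw [e2, master _ _ _ _ _ _ _ _ le_rfl hx, Wf_zero, sub_zero]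
  have hfinal : Wf (16 - 16 * (1 + x) * Real.exp (-x) - 4 * cc * sg x * x * eps x)
          (-32 + (32 + 8 * x) * Real.exp (-x) + (12 + 4 * x) * cc * sg x * eps x)
          (8 - 8 * Real.exp (-x) - 4 * cc * sg x * eps x)
          (8 * cc * sg x * x)
          (-(24 + 8 * x) * cc * sg x)
          (8 * cc * sg x)
          (-16 * sg x * x)
          (16 * sg x + 16 * cc * eps x) x
      = 24 * cc * (Real.sqrt (2 / Real.pi) * (1 - x) * Real.sqrt x * Real.exp (-x / 2) -
          Real.sqrt (2 / Real.pi) * Real.sqrt x * Real.exp (-(3 * x) / 2) +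
          erf (Real.sqrt (x / 2)) -
          (1 + x) * Real.exp (-x) * erf (Real.sqrt (x / 2))) := by
    have h23 : Real.exp (-(3 * x) / 2) = Real.exp (-x / 2) * Real.exp (-x) := by
      rw [← Real.exp_add]; ring_nf
    rw [sqrt_two_div_pi, h23, show erf (Real.sqrt (x / 2)) = eps x from rfl]
    simp only [Wf, sg]
    field_simp [cc_ne]
    ring
  rw [F3L, hOut, hfinal, Z3L_eq, one_div, ← mul_assoc,
    inv_mul_cancel₀ (mul_ne_zero (by norm_num) cc_ne), one_mul]
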